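/- Let A be a unital algebra with automorphism σ and T a σ-twisted trace on J^n for n even. Then τ(a₀,…,aₙ) := T(q(a₀)⋯q(aₙ)) satisfies the σ-twisted Hochschild cocycle condition: Σ_{k=0}^{n} (−1)^k τ(a₀,…,a_k a_{k+1},…,a_{n+1}) + (−1)^{n+1} τ(σ(a_{n+1}) a₀, a₁,…,aₙ) = 0 for all a₀,…,a_{n+1} ∈ A. -/

import Mathlib

/-- `q(a) := ι(a) − ῑ(a)` for two algebra maps (e.g. the canonical inclusions into the
free product `A ∗_ℂ A`). -/
def qMap {A B : Type*} [Ring A] [Algebra ℂ A] [Ring B] [Algebra ℂ B]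
    (ι ι' : A →ₐ[ℂ] B) : A → B := fun x => ι x - ι' x

/-- The subspace `J^k` spanned by products `a₀ q(a₁)⋯q(aₘ)` and `q(a₁)⋯q(aₘ)` with
`m ≥ k`, with the convention `J⁰ = A ∗_ℂ A` (the whole algebra). -/
def Jpow {A B : Type*} [Ring A] [Algebra ℂ A] [Ring B] [Algebra ℂ B]
    (ι ι' : A →ₐ[ℂ] B) (k : ℕ) : Submodule ℂ B :=
  if k = 0 then ⊤ else
    Submodule.span ℂ
      {x | ∃ (a0 : A) (l : List A), k ≤ l.length ∧
        (x = ι a0 * (l.map (qMap ι ι')).prod ∨ x = (l.map (qMap ι ι')).prod)}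


/-- Products `q(a_i) q(a_{i+1}) ⋯ q(a_{i+len−1})`. -/
def qProd {A B : Type*} [Ring A] [Algebra ℂ A] [Ring B] [Algebra ℂ B]
    (ι ι' : A →ₐ[ℂ] B) (a : ℕ → A) (i len : ℕ) : B :=
  ((List.range' i len).map fun t => qMap ι ι' (a t)).prod

section helpers
variable {A B : Type*} [Ring A] [Algebra ℂ A] [Ring B] [Algebra ℂ B]
    (ι ι' : A →ₐ[ℂ] B)

lemma qMap_mul (x y : A) :
    qMap ι ι' (x * y) = ι x * qMap ι ι' y + qMap ι ι' x * ι y - qMap ι ι' x * qMap ι ι' y := by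
  simp only [qMap, map_mul]; noncomm_ring

lemma qProd_zero (a : ℕ → A) (i : ℕ) : qProd ι ι' a i 0 = 1 := rfl

lemma qProd_succ_left (a : ℕ → A) (i m : ℕ) :
    qProd ι ι' a i (m + 1) = qMap ι ι' (a i) * qProd ι ι' a (i + 1) m := by
  simp [qProd, List.range'_succ]

lemma qProd_succ_right (a : ℕ → A) (i m : ℕ) :
    qProd ι ι' a i (m + 1) = qProd ι ι' a i m * qMap ι ι' (a (i + m)) := by
  simp [qProd, List.range'_concat]

lemma qProd_append (a : ℕ → A) (i m l : ℕ) :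
    qProd ι ι' a i m * qProd ι ι' a (i + m) l = qProd ι ι' a i (m + l) := by
  have h : List.range' i m 1 ++ List.range' (i + 1 * m) l 1 = List.range' i (l + m) 1 := by
    rw [List.range'_append, Nat.add_comm l m]
  simp only [one_mul] at h
  rw [qProd, qProd, qProd, ← List.prod_append, ← List.map_append, h, Nat.add_comm l m]

lemma qProd_eq_map (a : ℕ → A) (i len : ℕ) :
    qProd ι ι' a i len = (((List.range' i len).map a).map (qMap ι ι')).prod := by
  simp [qProd, List.map_map]; rfl

lemma qProd_mem (a : ℕ → A) (i len k : ℕ) (h : k ≤ len) :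
    qProd ι ι' a i len ∈ Jpow ι ι' k := by
  unfold Jpow
  split
  · exact Submodule.mem_top
  · exact Submodule.subset_span
      ⟨a 0, (List.range' i len).map a, by simpa using h, Or.inr (qProd_eq_map ι ι' a i len)⟩

lemma coeff_qProd_mem (a : ℕ → A) (a0 : A) (i len k : ℕ) (h : k ≤ len) :
    ι a0 * qProd ι ι' a i len ∈ Jpow ι ι' k := by
  unfold Jpow
  split
  · exact Submodule.mem_top
  · exact Submodule.subset_span
      ⟨a0, (List.range' i len).map a, by simpa using h,
        Or.inl (by rw [qProd_eq_map])⟩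

lemma mem_Jpow_zero (x : B) : x ∈ Jpow ι ι' 0 := by simp [Jpow]

end helpers

/-- If `T` is a `σ`-twisted trace on `J^n` (`n` even), then
`τ(a₀,…,aₙ) := T(q(a₀)⋯q(aₙ))` satisfies the `σ`-twisted Hochschild cocycle condition
`Σ_{k=0}^{n} (−1)^k τ(a₀,…,a_k a_{k+1},…,a_{n+1})
  + (−1)^{n+1} τ(σ(a_{n+1}) a₀, a₁,…,aₙ) = 0`. -/
theorem twisted_trace_hochschild_cocycle {A B : Type*} [Ring A] [Algebra ℂ A]
    [Ring B] [Algebra ℂ B] (ι ι' : A →ₐ[ℂ] B)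
    (σA : A ≃ₐ[ℂ] A) (σB : B ≃ₐ[ℂ] B)
    (hσι : ∀ a, σB (ι a) = ι (σA a)) (hσι' : ∀ a, σB (ι' a) = ι' (σA a))
    (n : ℕ) (hn : Even n) (T : B →ₗ[ℂ] ℂ)
    (hT : ∀ (k l : ℕ) (x y : B), k + l = n → x ∈ Jpow ι ι' k → y ∈ Jpow ι ι' l →
      T (x * y) = T (σB y * x))
    (a : ℕ → A) :
    (∑ k ∈ Finset.range (n + 1), (-1 : ℂ) ^ k *
        T (qProd ι ι' a 0 k * qMap ι ι' (a k * a (k + 1)) * qProd ι ι' a (k + 2) (n - k))) +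
      (-1 : ℂ) ^ (n + 1) *
        T (qMap ι ι' (σA (a (n + 1)) * a 0) * qProd ι ι' a 1 n) = 0 := by
  classical
  have hσq : ∀ x, σB (qMap ι ι' x) = qMap ι ι' (σA x) := fun x => by
    simp [qMap, map_sub, hσι, hσι']
  set U : ℕ → ℂ := fun k =>
    T (qProd ι ι' a 0 k * ι (a k) * qProd ι ι' a (k + 1) (n + 1 - k)) with hU
  set TQ : ℂ := T (qProd ι ι' a 0 (n + 2)) with hTQ
  have hodd : Odd (n + 1) := Even.add_one hn
  -- Step 1: rewrite each summand
  have step1 : ∀ k ∈ Finset.range (n + 1),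
      (-1 : ℂ) ^ k *
        T (qProd ι ι' a 0 k * qMap ι ι' (a k * a (k + 1)) * qProd ι ι' a (k + 2) (n - k))
      = ((-1 : ℂ) ^ k * U k - (-1 : ℂ) ^ (k + 1) * U (k + 1)) - (-1 : ℂ) ^ k * TQ := by
    intro k hk
    rw [Finset.mem_range, Nat.lt_succ_iff] at hk
    have h2 : n + 1 - k = (n - k) + 1 := by omega
    have h3 : qProd ι ι' a (k + 1) (n + 1 - k)
        = qMap ι ι' (a (k + 1)) * qProd ι ι' a (k + 2) (n - k) := by
      rw [h2, qProd_succ_left]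
    have h4 : qProd ι ι' a 0 (k + 1) = qProd ι ι' a 0 k * qMap ι ι' (a k) := by
      rw [qProd_succ_right]; simp
    have h5 : qProd ι ι' a 0 (n + 2)
        = qProd ι ι' a 0 k * qMap ι ι' (a k) *
            (qMap ι ι' (a (k + 1)) * qProd ι ι' a (k + 2) (n - k)) := by
      have h6 := qProd_append ι ι' a 0 (k + 2) (n - k)
      have h7 : (k + 2) + (n - k) = n + 2 := by omega
      rw [h7] at h6
      have h8 : qProd ι ι' a 0 (k + 2)
          = qProd ι ι' a 0 k * qMap ι ι' (a k) * qMap ι ι' (a (k + 1)) := by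
        rw [qProd_succ_right, qProd_succ_right]; simp
      rw [← h6]
      simp only [Nat.zero_add]
      rw [h8, mul_assoc]
    have e1 : qProd ι ι' a 0 k * qMap ι ι' (a k * a (k + 1)) * qProd ι ι' a (k + 2) (n - k)
        = qProd ι ι' a 0 k * ι (a k) * qProd ι ι' a (k + 1) (n + 1 - k)
          + qProd ι ι' a 0 (k + 1) * ι (a (k + 1)) * qProd ι ι' a (k + 2) (n + 1 - (k + 1))
          - qProd ι ι' a 0 (n + 2) := by
      rw [qMap_mul, h3, h4, h5, Nat.succ_sub_succ]
      noncomm_ring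
    rw [e1, map_sub, map_add, hU, hTQ]
    simp only [Nat.succ_sub_succ]
    ring
  rw [Finset.sum_congr rfl step1, Finset.sum_sub_distrib,
    Finset.sum_range_sub' (fun k => (-1 : ℂ) ^ k * U k), ← Finset.sum_mul]
  have hgeom : (∑ k ∈ Finset.range (n + 1), (-1 : ℂ) ^ k) = 1 := by
    rw [neg_one_geom_sum, if_neg (Nat.not_even_iff_odd.mpr hodd)]
  rw [hgeom, one_mul, pow_zero, one_mul, Odd.neg_one_pow hodd]
  -- Step 3: the last (twisted) term
  have hx1 : qMap ι ι' (a 0) * qProd ι ι' a 1 n = qProd ι ι' a 0 (n + 1) :=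
    (qProd_succ_left ι ι' a 0 n).symm
  have hmem1 : qMap ι ι' (a 0) * qProd ι ι' a 1 n ∈ Jpow ι ι' n := by
    rw [hx1]; exact qProd_mem ι ι' a 0 (n + 1) n (by omega)
  have hmem2 : ι (a 0) * qProd ι ι' a 1 n ∈ Jpow ι ι' n :=
    coeff_qProd_mem ι ι' a (a 0) 1 n n le_rfl
  have t1 : T (σB (ι (a (n + 1))) * (qMap ι ι' (a 0) * qProd ι ι' a 1 n))
      = U (n + 1) := by
    rw [← hT n 0 _ _ (by omega) hmem1 (mem_Jpow_zero ι ι' _), hx1, hU]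
    simp [qProd_zero]
  have t2 : T (σB (qMap ι ι' (a (n + 1))) * (ι (a 0) * qProd ι ι' a 1 n))
      = U 0 := by
    rw [← hT n 0 _ _ (by omega) hmem2 (mem_Jpow_zero ι ι' _), hU]
    have h9 : qProd ι ι' a 1 (n + 1) = qProd ι ι' a 1 n * qMap ι ι' (a (n + 1)) := by
      rw [qProd_succ_right]; rw [Nat.add_comm 1 n]
    simp [qProd_zero, h9, mul_assoc]
  have t3 : T (σB (qMap ι ι' (a (n + 1))) * (qMap ι ι' (a 0) * qProd ι ι' a 1 n))
      = TQ := by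
    rw [← hT n 0 _ _ (by omega) hmem1 (mem_Jpow_zero ι ι' _), hx1, hTQ]
    have h10 : qProd ι ι' a 0 (n + 2) = qProd ι ι' a 0 (n + 1) * qMap ι ι' (a (n + 1)) := by
      rw [qProd_succ_right]; simp
    rw [h10]
  have elast : T (qMap ι ι' (σA (a (n + 1)) * a 0) * qProd ι ι' a 1 n)
      = U (n + 1) + U 0 - TQ := by
    have e2 : qMap ι ι' (σA (a (n + 1)) * a 0) * qProd ι ι' a 1 n
        = σB (ι (a (n + 1))) * (qMap ι ι' (a 0) * qProd ι ι' a 1 n)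
          + σB (qMap ι ι' (a (n + 1))) * (ι (a 0) * qProd ι ι' a 1 n)
          - σB (qMap ι ι' (a (n + 1))) * (qMap ι ι' (a 0) * qProd ι ι' a 1 n) := by
      rw [qMap_mul, hσι, hσq]
      noncomm_ring
    rw [e2, map_sub, map_add, t1, t2, t3]
  rw [elast]
  ring
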